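/- There exists a finite alphabet X, a cost function c on (X ∪ {−})² that is non-negative, symmetric, and zero on the diagonal but violates the triangle inequality, and trees x̄, ȳ over X, such that the mapping distance strictly overestimates the tree edit distance: D_c(x̄, ȳ) > d_c(x̄, ȳ). -/

import Mathlib

/-- A rooted ordered tree with labels from `X`. -/
inductive PTree (X : Type) : Type where
  | node : X → List (PTree X) → PTree X

namespace PTree

variable {X : Type}

mutual
  /-- The labels of a tree in pre-order. -/
  def preorder : PTree X → List X
    | .node l cs => l :: preorderF cs
  /-- The labels of a forest in pre-order. -/
  def preorderF : List (PTree X) → List X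
    | [] => []
    | t :: ts => preorder t ++ preorderF ts
end

/-- The size of a tree (number of nodes). -/
def size (t : PTree X) : ℕ := (preorder t).length

/-- `Deletes f g l` holds iff the forest `g` is obtained from the forest `f` by
deleting one node labeled `l`, attaching its children in its place. -/
inductive Deletes : List (PTree X) → List (PTree X) → X → Prop where
  | here (l : X) (cs rest : List (PTree X)) :
      Deletes (.node l cs :: rest) (cs ++ rest) l
  | child {cs cs' : List (PTree X)} {l : X} (z : X) (rest : List (PTree X)) :
      Deletes cs cs' l → Deletes (.node z cs :: rest) (.node z cs' :: rest) l
  | skip {rest rest' : List (PTree X)} {l : X} (t : PTree X) :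
      Deletes rest rest' l → Deletes (t :: rest) (t :: rest') l

/-- `Replaces f g l l'` holds iff the forest `g` is obtained from the forest `f` by
changing the label `l` of one node into `l'`. -/
inductive Replaces : List (PTree X) → List (PTree X) → X → X → Prop where
  | here (l l' : X) (cs rest : List (PTree X)) :
      Replaces (.node l cs :: rest) (.node l' cs :: rest) l l'
  | child {cs cs' : List (PTree X)} {l l' : X} (z : X) (rest : List (PTree X)) :
      Replaces cs cs' l l' → Replaces (.node z cs :: rest) (.node z cs' :: rest) l l'
  | skip {rest rest' : List (PTree X)} {l l' : X} (t : PTree X) :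
      Replaces rest rest' l l' → Replaces (t :: rest) (t :: rest') l l'

/-- `EditStep c f g r` holds iff one tree edit (a deletion, an insertion, or a
replacement) of cost `r` under the cost function `c` transforms the forest `f`
into the forest `g`. The gap symbol `−` is represented by `none`:
deleting label `l` costs `c (some l) none`, inserting label `l` costs
`c none (some l)`, and replacing label `l` by `l'` costs `c (some l) (some l')`.
An insertion is exactly the inverse of a deletion (the inserted node may adopt
a consecutive run of existing siblings as children). -/
inductive EditStep (c : Option X → Option X → ℝ) :
    List (PTree X) → List (PTree X) → ℝ → Prop where
  | del {f g : List (PTree X)} {l : X} :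
      Deletes f g l → EditStep c f g (c (some l) none)
  | ins {f g : List (PTree X)} {l : X} :
      Deletes g f l → EditStep c f g (c none (some l))
  | rep {f g : List (PTree X)} {l l' : X} :
      Replaces f g l l' → EditStep c f g (c (some l) (some l'))

/-- `Script c f g r` holds iff some edit script (finite sequence of edits) of
total cost `r` under the cost function `c` transforms the forest `f` into the
forest `g`. -/
inductive Script (c : Option X → Option X → ℝ) :
    List (PTree X) → List (PTree X) → ℝ → Prop where
  | nil (f : List (PTree X)) : Script c f f 0
  | cons {f g h : List (PTree X)} {r s : ℝ} :
      EditStep c f g r → Script c g h s → Script c f h (r + s)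

/-- The tree edit distance `d_c`: the infimum of the costs of all edit scripts
transforming the tree `x` into the tree `y`. -/
noncomputable def editDist (c : Option X → Option X → ℝ) (x y : PTree X) : ℝ :=
  sInf {r : ℝ | Script c [x] [y] r}

mutual
  /-- In pre-order: for every node of the tree, the size of the subtree rooted
  at that node. -/
  def subtreeSizes : PTree X → List ℕ
    | .node l cs => size (.node l cs) :: subtreeSizesF cs
  /-- In pre-order: for every node of the forest, the size of the subtree rooted
  at that node. -/
  def subtreeSizesF : List (PTree X) → List ℕ
    | [] => []
    | t :: ts => subtreeSizes t ++ subtreeSizesF ts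
end

/-- The label of the `i`-th node of `t` in pre-order (`0`-based). -/
def label (t : PTree X) (i : Fin (size t)) : X := (preorder t).get i

/-- The `i`-th node of `t` (in `0`-based pre-order) is an ancestor of the
`j`-th node, characterized via pre-order indices and subtree sizes. -/
def IsAncestor (t : PTree X) (i j : ℕ) : Prop :=
  i < j ∧ j < i + (subtreeSizes t).getD i 0

/-- A tree mapping between `x` and `y`: a set of pairs of (`0`-based pre-order)
node indices such that every index occurs in at most one pair, the mapping is
order-preserving, and it is ancestor-preserving. -/
def IsTreeMapping (x y : PTree X) (M : Finset (Fin (size x) × Fin (size y))) : Prop :=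
  ∀ p ∈ M, ∀ q ∈ M,
    (p.1 = q.1 ↔ p.2 = q.2) ∧ (p.1 < q.1 ↔ p.2 < q.2) ∧
    (IsAncestor x ↑p.1 ↑q.1 ↔ IsAncestor y ↑p.2 ↑q.2)

/-- The cost of a tree mapping `M` under the cost function `c`: matched pairs
of nodes pay the replacement cost, unmatched nodes of `x` pay the deletion
cost, unmatched nodes of `y` pay the insertion cost. -/
def mappingCost (c : Option X → Option X → ℝ) (x y : PTree X)
    (M : Finset (Fin (size x) × Fin (size y))) : ℝ :=
  (∑ p ∈ M, c (some (label x p.1)) (some (label y p.2)))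
    + (∑ i ∈ Finset.univ.filter (fun i : Fin (size x) => ∀ p ∈ M, p.1 ≠ i),
        c (some (label x i)) none)
    + (∑ j ∈ Finset.univ.filter (fun j : Fin (size y) => ∀ p ∈ M, p.2 ≠ j),
        c none (some (label y j)))

/-- The mapping distance `D_c` (the quantity computed by the dynamic
programming scheme of Zhang and Shasha): the minimal cost of a tree mapping
between `x` and `y`. -/
noncomputable def mapDist (c : Option X → Option X → ℝ) (x y : PTree X) : ℝ :=
  sInf {r : ℝ | ∃ M, IsTreeMapping x y M ∧ mappingCost c x y M = r}

end PTree

open PTree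

noncomputable def ccost : Option (Fin 3) → Option (Fin 3) → ℝ :=
  fun u v => if u = v then 0 else if u = some 2 ∨ v = some 2 then 1 else 10

lemma ccost_nonneg : ∀ a b, 0 ≤ ccost a b := by
  intro a b; unfold ccost; split <;> [norm_num; split <;> norm_num]

lemma script_nonneg {f g : List (PTree (Fin 3))} {r : ℝ}
    (h : Script ccost f g r) : 0 ≤ r := by
  induction h with
  | nil => exact le_rfl
  | cons st _ ih =>
    have h0 : ∀ a b, (0:ℝ) ≤ ccost a b := ccost_nonneg
    cases st <;> exact add_nonneg (h0 _ _) ih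

def xt : PTree (Fin 3) := .node 0 []
def yt : PTree (Fin 3) := .node 1 []

lemma edit_le : editDist ccost xt yt ≤ 2 := by
  have hs : Script ccost [xt] [yt]
      (ccost (some 0) (some 2) + (ccost (some 2) (some 1) + 0)) :=
    .cons (.rep (.here 0 2 [] []))
      (.cons (.rep (.here 2 1 [] [])) (.nil _))
  have hv : ccost (some 0) (some 2) + (ccost (some 2) (some 1) + 0) = 2 := by
    simp [ccost]; norm_num
  refine csInf_le ⟨0, ?_⟩ ?_
  · rintro r hr; exact script_nonneg hr
  · exact hv ▸ hs
lemma map_ge : ∀ r ∈ {r : ℝ | ∃ M, IsTreeMapping xt yt M ∧ mappingCost ccost xt yt M = r},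
    (10:ℝ) ≤ r := by
  rintro r ⟨M, _, rfl⟩
  haveI : Subsingleton (Fin xt.size × Fin yt.size) :=
    (inferInstance : Subsingleton (Fin 1 × Fin 1))
  have hfilt : ∀ (M' : Finset (Fin 1 × Fin 1)) (hM' : M'.Nonempty),
      True := fun _ _ => trivial
  have hM : M = ∅ ∨ M = {((0 : Fin 1), (0 : Fin 1))} := by
    rcases M.eq_empty_or_nonempty with h | ⟨p, hp⟩
    · exact Or.inl h
    · right
      apply Finset.eq_singleton_iff_unique_mem.mpr
      exact ⟨cast (congrArg (· ∈ M) (Subsingleton.elim (α := Fin xt.size × Fin yt.size) p ((0 : Fin 1), (0 : Fin 1)))) hp,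
        fun q hq => Subsingleton.elim _ _⟩
  have h1 : ∀ (P : Fin 1 → Prop) [DecidablePred P], P 0 →
      Finset.filter P Finset.univ = {0} := by
    intro P _ hP; ext i
    simp [Subsingleton.elim i 0, hP]
  have h2 : ∀ (P : Fin 1 → Prop) [DecidablePred P], ¬ P 0 →
      Finset.filter P Finset.univ = ∅ := by
    intro P _ hP; ext i
    simp [Subsingleton.elim i 0, hP]
  haveI : Unique (Fin xt.size) := (inferInstance : Unique (Fin 1))
  haveI : Unique (Fin yt.size) := (inferInstance : Unique (Fin 1))
  have hlx : ∀ i, label xt i = 0 := fun i => by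
    rw [Subsingleton.elim i ⟨0, Nat.one_pos⟩]; rfl
  have hly : ∀ i, label yt i = 1 := fun i => by
    rw [Subsingleton.elim i ⟨0, Nat.one_pos⟩]; rfl
  rcases hM with rfl | hM1
  · unfold mappingCost
    simp [Finset.sum_filter, hlx, hly, ccost]
  · have hne : M.Nonempty := by rw [hM1]; exact Finset.singleton_nonempty _
    have hall : ∀ q, q ∈ M := fun q => by
      obtain ⟨p, hp⟩ := hne
      exact Subsingleton.elim p q ▸ hp
    have hc1 : ∀ i, ¬ ∀ p ∈ M, p.1 ≠ i := fun i h => h (i, default) (hall _) rfl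
    have hc2 : ∀ j, ¬ ∀ p ∈ M, p.2 ≠ j := fun j h => h (default, j) (hall _) rfl
    unfold mappingCost
    simp [Finset.sum_filter, hlx, hly, hc1, hc2, ccost]
    have := Finset.card_pos.mpr hne
    have : (1:ℝ) ≤ M.card := by exact_mod_cast this
    nlinarith

/-- A pseudo-metric on a type `S`: non-negative, symmetric, zero on the
diagonal, and satisfying the triangle inequality. -/
def IsPseudoMetric {S : Type} (c : S → S → ℝ) : Prop :=
  (∀ a b, 0 ≤ c a b) ∧ (∀ a b, c a b = c b a) ∧ (∀ a, c a a = 0) ∧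
    (∀ a b d, c a d ≤ c a b + c b d)

/-- There exist a finite alphabet `X`, a cost function `c` on
`(X ∪ {−})²` which is non-negative, symmetric, and zero on the diagonal but
violates the triangle inequality, and trees `x̄`, `ȳ` over `X`, such that the
mapping distance strictly overestimates the tree edit distance:
`D_c(x̄, ȳ) > d_c(x̄, ȳ)`. -/

theorem mapDist_can_overestimate_editDist :
    ∃ (X : Type) (_ : Fintype X) (c : Option X → Option X → ℝ)
      (x y : PTree X),
      (∀ a b, 0 ≤ c a b) ∧ (∀ a b, c a b = c b a) ∧ (∀ a, c a a = 0) ∧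
      (∃ a b d : Option X, c a d > c a b + c b d) ∧
      PTree.mapDist c x y > PTree.editDist c x y := by
  refine ⟨Fin 3, inferInstance, ccost, xt, yt, ccost_nonneg, ?_, ?_, ?_, ?_⟩
  · intro a b; unfold ccost
    by_cases h : a = b
    · simp [h]
    · simp [h, Ne.symm h, or_comm]
  · intro a; simp [ccost]
  · refine ⟨some 0, some 2, some 1, ?_⟩
    simp [ccost]; norm_num
  · have h1 : PTree.editDist ccost xt yt ≤ 2 := edit_le
    have h2 : (10:ℝ) ≤ PTree.mapDist ccost xt yt := by
      apply le_csInf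
      · exact ⟨mappingCost ccost xt yt ∅, ∅, fun p hp => absurd hp (by simp), rfl⟩
      · exact map_ge
    linarith
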